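/- Let ℓ, m, L be positive integers with ℓ ≤ m. The number of L-tuples (u₁, …, u_L) ∈ ({0,1}^m)^L for which there exists a single string s ∈ {0,1}^ℓ that is a subsequence of every uᵢ is at most 2^ℓ · (Σ_{t=ℓ}^{m} C(t−1, ℓ−1)·2^{m−t})^L, where C(a,b) denotes the binomial coefficient. (Counting core of the proof of Theorem 5.2 of the paper.) -/

import Mathlib

/-- `s` (of length `ℓ`) is a subsequence of `t` (of length `m`): there are indices
`i₁ < ⋯ < i_ℓ` with `t (i_j) = s j` for all `j`. -/
def IsSubseq {α : Type*} {ℓ m : ℕ} (s : Fin ℓ → α) (t : Fin m → α) : Prop :=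
  ∃ f : Fin ℓ → Fin m, StrictMono f ∧ ∀ j, t (f j) = s j

open Finset

lemma exists_min_witness {ℓ m : ℕ} (s : Fin ℓ → Fin 2) (u : Fin m → Fin 2)
    (h : IsSubseq s u) :
    ∃ f : Fin ℓ → Fin m, StrictMono f ∧ (∀ j, u (f j) = s j) ∧
      ∀ (j : Fin ℓ) (p : Fin m), (∀ k, k < j → f k < p) → p < f j → u p ≠ s j := by
  classical
  set F : Finset (Fin ℓ → Fin m) :=
    univ.filter (fun f => StrictMono f ∧ ∀ j, u (f j) = s j) with hF
  have hne : F.Nonempty := by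
    obtain ⟨f, hf1, hf2⟩ := h
    exact ⟨f, by simp [hF, hf1, hf2]⟩
  obtain ⟨f, hfF, hmin⟩ := F.exists_min_image (fun f => ∑ j, (f j : ℕ)) hne
  simp only [hF, mem_filter, mem_univ, true_and] at hfF
  refine ⟨f, hfF.1, hfF.2, ?_⟩
  intro j p hbelow hlt hup
  set f' := Function.update f j p with hf'
  have hmono : StrictMono f' := by
    intro a b hab
    rcases eq_or_ne a j with rfl | ha
    · rw [hf', Function.update_self, Function.update_of_ne (ne_of_gt hab)]
      exact lt_of_lt_of_le hlt (hfF.1.monotone hab.le)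
    · rcases eq_or_ne b j with rfl | hb
      · rw [hf', Function.update_self, Function.update_of_ne ha]
        exact hbelow a hab
      · rw [hf', Function.update_of_ne ha, Function.update_of_ne hb]
        exact hfF.1 hab
  have hval : ∀ k, u (f' k) = s k := by
    intro k
    rcases eq_or_ne k j with rfl | hk
    · rw [hf', Function.update_self]; exact hup
    · rw [hf', Function.update_of_ne hk]; exact hfF.2 k
  have hF' : f' ∈ F := by simp [hF, hmono, hval]
  have hsum : ∑ k, (f' k : ℕ) < ∑ k, (f k : ℕ) := by
    rw [hf']
    rw [show (∑ k, ((Function.update f j p k : Fin m) : ℕ)) =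
        ∑ k, (Function.update (fun k => (f k : ℕ)) j (p : ℕ)) k from
      Finset.sum_congr rfl (by
        intro k _
        rcases eq_or_ne k j with rfl | hk
        · simp
        · simp [Function.update_of_ne hk])]
    rw [Finset.sum_update_of_mem (mem_univ j)]
    have : (∑ k, (f k : ℕ)) = (f j : ℕ) + ∑ x ∈ univ \ {j}, (f x : ℕ) := by
      rw [Finset.sum_eq_add_sum_sdiff_singleton_of_mem (mem_univ j)]
    have hplt : (p:ℕ) < (f j : ℕ) := hlt
    omega
  have := hmin f' hF'
  omega


lemma sm_le_apply {ℓ m : ℕ} (f : Fin ℓ → Fin m) (h : StrictMono f) (j : Fin ℓ) :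
    (j:ℕ) ≤ (f j : ℕ) := by
  have key : ∀ n : ℕ, ∀ j : Fin ℓ, (j:ℕ) = n → n ≤ (f j : ℕ) := by
    intro n
    induction n with
    | zero => intro j _; exact Nat.zero_le _
    | succ n ih =>
      intro j hj
      have hn : n < ℓ := by omega
      have h1 := ih ⟨n, hn⟩ rfl
      have h2 : f ⟨n, hn⟩ < f j := h (by simp [Fin.lt_def, hj])
      have := Fin.lt_def.mp h2
      omega
  exact key _ j rfl

lemma sm_eq_of_image_eq {ℓ m : ℕ} {f f' : Fin ℓ → Fin m} (hf : StrictMono f)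
    (hf' : StrictMono f') (him : Finset.image f univ = Finset.image f' univ) : f = f' := by
  have hc : (Finset.image f univ).card = ℓ := by
    rw [Finset.card_image_of_injective _ hf.injective, card_univ, Fintype.card_fin]
  have e1 := Finset.orderEmbOfFin_unique hc (fun x => Finset.mem_image_of_mem f (mem_univ x)) hf
  have e2 := Finset.orderEmbOfFin_unique hc
    (fun x => him ▸ Finset.mem_image_of_mem f' (mem_univ x)) hf'
  funext x; rw [congrFun e1 x, congrFun e2 x]

open scoped Classical in
lemma card_subseq {ℓ m : ℕ} (hℓ : 0 < ℓ) (hℓm : ℓ ≤ m) (s : Fin ℓ → Fin 2) :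
    (univ.filter (fun u : Fin m → Fin 2 => IsSubseq s u)).card ≤
      ∑ t ∈ Icc ℓ m, (t-1).choose (ℓ-1) * 2^(m-t) := by
  classical
  have hm : 0 < m := lt_of_lt_of_le hℓ hℓm
  set A := univ.filter (fun u : Fin m → Fin 2 => IsSubseq s u) with hA
  set g : (Fin m → Fin 2) → (Fin ℓ → Fin m) := fun u =>
    if h : IsSubseq s u then (exists_min_witness s u h).choose else fun _ => ⟨0, hm⟩ with hgdef
  have hg : ∀ u, IsSubseq s u → StrictMono (g u) ∧ (∀ j, u (g u j) = s j) ∧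
      ∀ (j : Fin ℓ) (p : Fin m), (∀ k, k < j → g u k < p) → p < g u j → u p ≠ s j := by
    intro u h
    simp only [hgdef, dif_pos h]
    exact (exists_min_witness s u h).choose_spec
  set last : Fin ℓ := ⟨ℓ-1, by omega⟩ with hlast
  set tOf : (Fin m → Fin 2) → ℕ := fun u => (g u last : ℕ) + 1 with htOf
  have hfib : ∀ u ∈ A, tOf u ∈ Icc ℓ m := by
    intro u hu
    rw [hA, mem_filter] at hu
    have h1 := sm_le_apply _ (hg u hu.2).1 last
    have h2 := (g u last).isLt
    simp only [htOf, mem_Icc, hlast] at *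
    omega
  rw [Finset.card_eq_sum_card_fiberwise hfib]
  refine Finset.sum_le_sum ?_
  intro t ht
  rw [mem_Icc] at ht
  set pt : Fin m := ⟨t-1, by omega⟩ with hpt
  set Hset : Finset (Fin m → Fin 2) :=
    univ.filter (fun v : Fin m → Fin 2 => ∀ p : Fin m, (p:ℕ) < t → v p = 0) with hHset
  have hHcard : Hset.card ≤ 2^(m-t) := by
    have hkey : Hset.card ≤ (univ : Finset (Fin (m-t) → Fin 2)).card := by
      apply Finset.card_le_card_of_injOn
        (fun v => fun q : Fin (m-t) => v ⟨t + q, by have := q.isLt; omega⟩)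
        (fun v _ => mem_univ _)
      intro v hv v' hv' hvv
      simp only [Finset.coe_filter, Set.mem_setOf_eq, hHset, mem_filter] at hv hv'
      funext p
      by_cases hp : (p:ℕ) < t
      · rw [hv.2 p hp, hv'.2 p hp]
      · have hq : (p:ℕ) - t < m - t := by omega
        have hpe : p = ⟨t + ((p:ℕ) - t), by have := p.isLt; omega⟩ := Fin.ext (by simp; omega)
        rw [hpe]
        exact congrFun hvv ⟨(p:ℕ) - t, hq⟩
    rwa [card_univ, Fintype.card_fun, Fintype.card_fin, Fintype.card_fin] at hkey
  set Gset : Finset (Finset (Fin m)) := (Finset.Iio pt).powersetCard (ℓ-1) with hGset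
  have hGcard : Gset.card = (t-1).choose (ℓ-1) := by
    rw [hGset, Finset.card_powersetCard, Fin.card_Iio]
  calc ((A.filter fun u => tOf u = t)).card ≤ (Gset ×ˢ Hset).card := ?_
    _ ≤ (t-1).choose (ℓ-1) * 2^(m-t) := by
        rw [Finset.card_product, hGcard]
        exact Nat.mul_le_mul_left _ hHcard
  apply Finset.card_le_card_of_injOn
    (fun u => ((Finset.image (g u) univ).erase pt, fun p : Fin m => if t ≤ (p:ℕ) then u p else 0))
  · -- maps into target
    intro u hu
    rw [Finset.mem_coe, mem_filter, hA, mem_filter] at hu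
    obtain ⟨⟨-, hsub⟩, htu⟩ := hu
    obtain ⟨hmono, hval, hgreedy⟩ := hg u hsub
    have hglast : g u last = pt := by
      apply Fin.ext
      simp only [htOf] at htu
      simp only [hpt]
      omega
    rw [Finset.mem_coe, Finset.mem_product]
    constructor
    · rw [hGset, Finset.mem_powersetCard]
      constructor
      · intro q hq
        rw [Finset.mem_erase, Finset.mem_image] at hq
        obtain ⟨hne, j, -, rfl⟩ := hq
        rw [Finset.mem_Iio]
        have hle : g u j ≤ g u last := by
          apply hmono.monotone
          simp only [Fin.le_def, hlast]
          omega
        rw [← hglast]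
        exact lt_of_le_of_ne hle (by rwa [hglast])
      · rw [Finset.card_erase_of_mem, Finset.card_image_of_injective _ hmono.injective,
          card_univ, Fintype.card_fin]
        rw [← hglast]
        exact Finset.mem_image_of_mem _ (mem_univ last)
    · rw [hHset, mem_filter]
      refine ⟨mem_univ _, fun p hp => ?_⟩
      simp only [if_neg (by omega : ¬ t ≤ (p:ℕ))]
  · -- injective
    intro u hu u' hu' heq
    simp only [Finset.coe_filter, Set.mem_setOf_eq, hA, mem_filter, mem_univ, true_and]
      at hu hu'
    obtain ⟨hsub, htu⟩ := hu
    obtain ⟨hsub', htu'⟩ := hu'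
    obtain ⟨hmono, hval, hgreedy⟩ := hg u hsub
    obtain ⟨hmono', hval', hgreedy'⟩ := hg u' hsub'
    have hglast : g u last = pt := Fin.ext (by simp only [htOf] at htu; simp only [hpt]; omega)
    have hglast' : g u' last = pt :=
      Fin.ext (by simp only [htOf] at htu'; simp only [hpt]; omega)
    have h1 : (Finset.image (g u) univ).erase pt = (Finset.image (g u') univ).erase pt :=
      congrArg Prod.fst heq
    have h2 : (fun p : Fin m => if t ≤ (p:ℕ) then u p else 0)
        = (fun p : Fin m => if t ≤ (p:ℕ) then u' p else 0) := congrArg Prod.snd heq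
    have himg : Finset.image (g u) univ = Finset.image (g u') univ := by
      have e1 : Finset.image (g u) univ = insert pt ((Finset.image (g u) univ).erase pt) := by
        rw [Finset.insert_erase (hglast ▸ Finset.mem_image_of_mem _ (mem_univ last))]
      have e2 : Finset.image (g u') univ
          = insert pt ((Finset.image (g u') univ).erase pt) := by
        rw [Finset.insert_erase (hglast' ▸ Finset.mem_image_of_mem _ (mem_univ last))]
      rw [e1, e2, h1]
    have hgg : g u = g u' := sm_eq_of_image_eq hmono hmono' himg
    funext p
    by_cases hp : t ≤ (p:ℕ)
    · have := congrFun h2 p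
      simpa [if_pos hp] using this
    · by_cases hrange : ∃ j, g u j = p
      · obtain ⟨j, hj⟩ := hrange
        have e1 : u p = s j := by rw [← hj]; exact hval j
        have e2 : u' p = s j := by rw [← hj, hgg]; exact hval' j
        rw [e1, e2]
      · have hplast : p < g u last := by
          rw [hglast, Fin.lt_def]
          simp only [hpt]
          have : (p : ℕ) ≠ t - 1 := by
            intro hc
            exact hrange ⟨last, hglast.trans (Fin.ext (by simp [hpt, hc])).symm⟩
          omega
        set J : Finset (Fin ℓ) := univ.filter (fun j => p < g u j) with hJ
        have hJne : J.Nonempty := ⟨last, by simp [hJ, hplast]⟩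
        set j0 := J.min' hJne with hj0
        have hj0J : j0 ∈ J := J.min'_mem hJne
        have hj0lt : p < g u j0 := by
          rw [hJ, mem_filter] at hj0J; exact hj0J.2
        have hbelow : ∀ k, k < j0 → g u k < p := by
          intro k hk
          have hkJ : k ∉ J := fun hkJ => absurd (J.min'_le k hkJ) (not_le.mpr hk)
          rw [hJ, mem_filter] at hkJ
          push_neg at hkJ
          have hle := hkJ (mem_univ k)
          exact lt_of_le_of_ne hle (fun hc => hrange ⟨k, hc⟩)
        have hne1 : u p ≠ s j0 := hgreedy j0 p hbelow hj0lt
        have hne2 : u' p ≠ s j0 := by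
          apply hgreedy' j0 p
          · intro k hk; rw [← hgg]; exact hbelow k hk
          · rw [← hgg]; exact hj0lt
        omega

/-- Let `ℓ, m, L` be positive integers with `ℓ ≤ m`. The number of `L`-tuples
`(u₁, …, u_L) ∈ ({0,1}^m)^L` for which there is a single string `s ∈ {0,1}^ℓ` that is a
subsequence of every `uᵢ` is at most
`2^ℓ (Σ_{t=ℓ}^{m} C(t-1, ℓ-1) 2^{m-t})^L`. -/
theorem count_tuples_common_subseq (ℓ m L : ℕ) (hℓ : 0 < ℓ) (hL : 0 < L) (hℓm : ℓ ≤ m) :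
    {w : Fin L → Fin m → Fin 2 |
        ∃ s : Fin ℓ → Fin 2, ∀ i, IsSubseq s (w i)}.ncard ≤
      2 ^ ℓ * (∑ t ∈ Finset.Icc ℓ m, (t - 1).choose (ℓ - 1) * 2 ^ (m - t)) ^ L := by
  classical
  set N := ∑ t ∈ Finset.Icc ℓ m, (t - 1).choose (ℓ - 1) * 2 ^ (m - t) with hN
  have hset : {w : Fin L → Fin m → Fin 2 | ∃ s : Fin ℓ → Fin 2, ∀ i, IsSubseq s (w i)}
      = ↑(univ.filter fun w : Fin L → Fin m → Fin 2 => ∃ s : Fin ℓ → Fin 2, ∀ i, IsSubseq s (w i)) := by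
    ext w; simp
  rw [hset, Set.ncard_coe_finset]
  have hsub : (univ.filter fun w : Fin L → Fin m → Fin 2 =>
        ∃ s : Fin ℓ → Fin 2, ∀ i, IsSubseq s (w i))
      ⊆ (univ : Finset (Fin ℓ → Fin 2)).biUnion
          (fun s => univ.filter fun w : Fin L → Fin m → Fin 2 => ∀ i, IsSubseq s (w i)) := by
    intro w hw
    rw [mem_filter] at hw
    obtain ⟨-, s, hs⟩ := hw
    rw [Finset.mem_biUnion]
    exact ⟨s, mem_univ s, by rw [mem_filter]; exact ⟨mem_univ w, hs⟩⟩
  calc (univ.filter fun w : Fin L → Fin m → Fin 2 =>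
        ∃ s : Fin ℓ → Fin 2, ∀ i, IsSubseq s (w i)).card
      ≤ ((univ : Finset (Fin ℓ → Fin 2)).biUnion
          (fun s => univ.filter fun w : Fin L → Fin m → Fin 2 => ∀ i, IsSubseq s (w i))).card :=
        Finset.card_le_card hsub
    _ ≤ ∑ s : Fin ℓ → Fin 2,
          (univ.filter fun w : Fin L → Fin m → Fin 2 => ∀ i, IsSubseq s (w i)).card :=
        Finset.card_biUnion_le
    _ ≤ ∑ _s : Fin ℓ → Fin 2, N ^ L := by
        apply Finset.sum_le_sum
        intro s _
        have hpi : (univ.filter fun w : Fin L → Fin m → Fin 2 => ∀ i, IsSubseq s (w i))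
            = Fintype.piFinset (fun _ : Fin L => univ.filter fun u : Fin m → Fin 2 => IsSubseq s u) := by
          ext w
          simp [Fintype.mem_piFinset]
        rw [hpi, Fintype.card_piFinset]
        calc ∏ _i : Fin L, (univ.filter fun u : Fin m → Fin 2 => IsSubseq s u).card
            = (univ.filter fun u : Fin m → Fin 2 => IsSubseq s u).card ^ L := by
              rw [Finset.prod_const, card_univ, Fintype.card_fin]
          _ ≤ N ^ L := Nat.pow_le_pow_left (card_subseq hℓ hℓm s) L
    _ = 2 ^ ℓ * N ^ L := by
        rw [Finset.sum_const, card_univ, Fintype.card_fun, Fintype.card_fin, Fintype.card_fin,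
          smul_eq_mul]
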